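/- Let F_c : [1,∞) → [0,∞) be a continuous non-decreasing function with F_c(1) = 0, F_c(x) → ∞, and F_c(x) ≤ C·x/log(x+1) for all x ≥ 1 and some constant C > 0. Set q_0 = 1 and q_j = min{x : F_c(x) = j} for j ≥ 1, and let {P_j}_{j≥1} be independent random variables, where P_j takes values in (q_{j−1}, q_j] and is distributed according to the probability measure dF_c restricted to (q_{j−1}, q_j]. Let u_0 be the positive root of e^u = 1+u+u² and D = max{√(8C), 8/u_0}. Then for every t ∈ ℝ and every J ≥ 1 such that x := q_J satisfies x/log(x+1) ≥ log(|t|+1), one has P( |Σ_{j=1}^J P_j^{−it} − ∫_1^x u^{−it} dF_c(u)| ≥ √2·D·(√x + √(x·log(|t|+1)/log(x+1))) ) ≤ 4/((x+1)²(|t|+1)²). -/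

import Mathlib

open MeasureTheory ProbabilityTheory Filter Set

section Aux


lemma exp_quad_bound {u₀ : ℝ} (hu₀pos : 0 < u₀) (hu₀ : Real.exp u₀ = 1 + u₀ + u₀ ^ 2)
    {u : ℝ} (hu : |u| ≤ u₀) : Real.exp u ≤ 1 + u + u ^ 2 := by
  rcases le_or_gt u 0 with h | h
  · have h1 : 1 - u ≤ Real.exp (-u) := by
      have := Real.add_one_le_exp (-u); linarith
    have h2 : Real.exp u ≤ (1 - u)⁻¹ := by
      have h2 : Real.exp u = (Real.exp (-u))⁻¹ := by rw [← Real.exp_neg, neg_neg]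
      rw [h2]
      exact inv_anti₀ (by linarith) h1
    refine h2.trans ?_
    rw [inv_eq_one_div, div_le_iff₀ (by linarith : (0:ℝ) < 1 - u)]
    nlinarith [sq_nonneg u, sq_nonneg (u - 1)]
  · set f : ℝ → ℝ := fun v => (1 + v + v ^ 2) * Real.exp (-v) with hf
    have hd : ∀ v : ℝ, HasDerivAt f ((v - v ^ 2) * Real.exp (-v)) v := by
      intro v
      have h1 : HasDerivAt (fun v : ℝ => 1 + v + v ^ 2) (0 + 1 + 2 * v) v := by
        refine (((hasDerivAt_const v (1:ℝ)).add (hasDerivAt_id v)).add ?_)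
        simpa using hasDerivAt_pow 2 v
      have h2 : HasDerivAt (fun v : ℝ => Real.exp (-v)) (-Real.exp (-v)) v := by
        simpa [Function.comp_def] using (Real.hasDerivAt_exp (-v)).comp v (hasDerivAt_neg v)
      have := h1.mul h2
      refine this.congr_deriv ?_
      ring
    have hcont : Continuous f := by fun_prop
    have hf0 : f 0 = 1 := by simp [hf]
    have hfu₀ : f u₀ = 1 := by
      have : f u₀ = Real.exp u₀ * Real.exp (-u₀) := by simp only [hf]; rw [← hu₀]
      rw [this, ← Real.exp_add, add_neg_cancel, Real.exp_zero]
    have h1lt : 1 < u₀ := by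
      by_contra hle
      push_neg at hle
      have hsm : StrictMonoOn f (Set.Icc 0 u₀) := by
        refine strictMonoOn_of_deriv_pos (convex_Icc 0 u₀) hcont.continuousOn ?_
        intro v hv
        rw [interior_Icc] at hv
        rw [(hd v).deriv]
        have hv1 : v < 1 := lt_of_lt_of_le hv.2 hle
        have : 0 < v - v ^ 2 := by nlinarith [hv.1]
        positivity
      have := hsm (Set.mem_Icc.2 ⟨le_refl 0, hu₀pos.le⟩)
        (Set.mem_Icc.2 ⟨hu₀pos.le, le_refl u₀⟩) hu₀pos
      rw [hf0, hfu₀] at this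
      exact lt_irrefl 1 this
    have hub : u ≤ u₀ := le_trans (le_abs_self u) hu
    have key : 1 ≤ f u := by
      rcases le_or_gt u 1 with h1 | h1
      · have hmono : MonotoneOn f (Set.Icc 0 1) := by
          refine monotoneOn_of_deriv_nonneg (convex_Icc 0 1) hcont.continuousOn
            (fun v hv => (hd v).differentiableAt.differentiableWithinAt) ?_
          intro v hv
          rw [interior_Icc] at hv
          rw [(hd v).deriv]
          have : 0 ≤ v - v ^ 2 := by nlinarith [hv.1.le, hv.2.le]
          positivity
        have := hmono (Set.mem_Icc.2 ⟨le_refl 0, zero_le_one⟩)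
          (Set.mem_Icc.2 ⟨h.le, h1⟩) h.le
        rwa [hf0] at this
      · have hanti : AntitoneOn f (Set.Icc 1 u₀) := by
          refine antitoneOn_of_deriv_nonpos (convex_Icc 1 u₀) hcont.continuousOn
            (fun v hv => (hd v).differentiableAt.differentiableWithinAt) ?_
          intro v hv
          rw [interior_Icc] at hv
          rw [(hd v).deriv]
          have h2 : v - v ^ 2 ≤ 0 := by nlinarith [hv.1.le]
          have := Real.exp_pos (-v)
          nlinarith
        have := hanti (Set.mem_Icc.2 ⟨h1.le, hub⟩)
          (Set.mem_Icc.2 ⟨h1lt.le, le_refl u₀⟩) hub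
        rw [hfu₀] at this
        linarith
    have := mul_le_mul_of_nonneg_right key (Real.exp_pos u).le
    rw [one_mul, hf, mul_assoc, ← Real.exp_add, neg_add_cancel, Real.exp_zero, mul_one] at this
    linarith

lemma log_add_one_le_sqrt {x : ℝ} (hx : 1 ≤ x) : Real.log (x + 1) ≤ Real.sqrt x := by
  set s := Real.sqrt x with hs
  have hs1 : 1 ≤ s := by
    rw [hs, show (1:ℝ) = Real.sqrt 1 by simp]
    exact Real.sqrt_le_sqrt hx
  have hxs : s ^ 2 = x := Real.sq_sqrt (by linarith)
  have hsum := Real.sum_le_exp_of_nonneg (by linarith : (0:ℝ) ≤ s) 4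
  have hexpand : (1:ℝ) + s + s ^ 2 / 2 + s ^ 3 / 6 ≤ Real.exp s := by
    have : ∑ i ∈ Finset.range 4, s ^ i / (Nat.factorial i : ℝ) =
        1 + s + s ^ 2 / 2 + s ^ 3 / 6 := by
      norm_num [Finset.sum_range_succ, Nat.factorial]
    rwa [this] at hsum
  have hexp : x + 1 ≤ Real.exp s := by nlinarith [sq_nonneg (s - 3)]
  calc Real.log (x + 1) ≤ Real.log (Real.exp s) := by
        apply Real.log_le_log (by linarith) hexp
    _ = s := Real.log_exp s

lemma integrable_of_bdd {Ω : Type*} {E : Type*} [MeasurableSpace Ω] [NormedAddCommGroup E]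
    {μ : Measure Ω} [IsFiniteMeasure μ] {f : Ω → E} (hf : AEStronglyMeasurable f μ)
    (c : ℝ) (h : ∀ ω, ‖f ω‖ ≤ c) : Integrable f μ :=
  (integrable_const c).mono' hf (ae_of_all μ h)

lemma mgf_single {Ω : Type*} [MeasurableSpace Ω] (μ : Measure Ω) [IsProbabilityMeasure μ]
    {W : Ω → ℝ} (hm : Measurable W) (hb : ∀ ω, |W ω| ≤ 2)
    (h0 : ∫ ω, W ω ∂μ = 0) (h2 : ∫ ω, (W ω) ^ 2 ∂μ ≤ 1)
    {u₀ : ℝ} (hu₀pos : 0 < u₀) (hu₀ : Real.exp u₀ = 1 + u₀ + u₀ ^ 2)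
    {l : ℝ} (hl0 : 0 ≤ l) (hl : l ≤ u₀ / 2)
    (hquad : ∀ u : ℝ, |u| ≤ u₀ → Real.exp u ≤ 1 + u + u ^ 2) :
    mgf W μ l ≤ Real.exp (l ^ 2) := by
  have hWint : Integrable W μ := integrable_of_bdd hm.aestronglyMeasurable 2
    (fun ω => by rw [Real.norm_eq_abs]; exact hb ω)
  have hW2int : Integrable (fun ω => (W ω) ^ 2) μ :=
    integrable_of_bdd (hm.pow_const 2).aestronglyMeasurable 4 (fun ω => by
      rw [Real.norm_eq_abs, abs_pow]
      calc |W ω| ^ 2 ≤ 2 ^ 2 := by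
            apply pow_le_pow_left₀ (abs_nonneg _) (hb ω)
        _ = 4 := by norm_num)
  have hpt : ∀ ω, Real.exp (l * W ω) ≤ 1 + l * W ω + (l * W ω) ^ 2 := by
    intro ω
    apply hquad
    rw [abs_mul, abs_of_nonneg hl0]
    calc l * |W ω| ≤ l * 2 := by nlinarith [hb ω, abs_nonneg (W ω)]
      _ ≤ u₀ := by linarith
  have hexpint : Integrable (fun ω => Real.exp (l * W ω)) μ :=
    integrable_of_bdd ((hm.const_mul l).exp).aestronglyMeasurable (Real.exp (l * 2))
      (fun ω => by
        rw [Real.norm_eq_abs, abs_of_pos (Real.exp_pos _), Real.exp_le_exp]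
        nlinarith [hb ω, abs_nonneg (W ω), le_abs_self (W ω)])
  have hrint : Integrable (fun ω => 1 + l * W ω + (l * W ω) ^ 2) μ := by
    apply Integrable.add
    · exact (integrable_const 1).add (hWint.const_mul l)
    · have : (fun ω => (l * W ω) ^ 2) = fun ω => l ^ 2 * (W ω) ^ 2 := by
        funext ω; ring
      rw [this]
      exact hW2int.const_mul _
  have hint : mgf W μ l ≤ ∫ ω, (1 + l * W ω + (l * W ω) ^ 2) ∂μ :=
    integral_mono hexpint hrint hpt
  have intq : Integrable (fun ω => l ^ 2 * (W ω) ^ 2) μ := hW2int.const_mul _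
  have int1 : Integrable (fun ω => 1 + l * W ω) μ := by
    simpa using (integrable_const (1:ℝ)).add (hWint.const_mul l)
  have hcalc : ∫ ω, (1 + l * W ω + (l * W ω) ^ 2) ∂μ = 1 + l ^ 2 * ∫ ω, (W ω) ^ 2 ∂μ := by
    have e1 : ∫ ω, (1 + l * W ω + (l * W ω) ^ 2) ∂μ =
        ∫ ω, ((1 + l * W ω) + l ^ 2 * (W ω) ^ 2) ∂μ :=
      integral_congr_ae (ae_of_all _ fun ω => by ring)
    rw [e1, integral_add int1 intq, integral_add (integrable_const 1) (hWint.const_mul l),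
      integral_const, integral_const_mul, integral_const_mul, h0]
    simp
  rw [hcalc] at hint
  have : 1 + l ^ 2 * ∫ ω, (W ω) ^ 2 ∂μ ≤ 1 + l ^ 2 := by nlinarith [sq_nonneg l]
  have hfin : (1:ℝ) + l ^ 2 ≤ Real.exp (l ^ 2) := by
    have := Real.add_one_le_exp (l ^ 2); linarith
  linarith

lemma tail_one {Ω : Type*} [MeasurableSpace Ω] (μ : Measure Ω) [IsProbabilityMeasure μ]
    (W : ℕ → Ω → ℝ) (hindep : iIndepFun W μ)
    (hm : ∀ i, Measurable (W i)) (hb : ∀ i ω, |W i ω| ≤ 2)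
    (h0 : ∀ i, ∫ ω, W i ω ∂μ = 0) (h2 : ∀ i, ∫ ω, (W i ω) ^ 2 ∂μ ≤ 1)
    {u₀ : ℝ} (hu₀pos : 0 < u₀) (hu₀ : Real.exp u₀ = 1 + u₀ + u₀ ^ 2)
    (hquad : ∀ u : ℝ, |u| ≤ u₀ → Real.exp u ≤ 1 + u + u ^ 2)
    (J : ℕ) {l : ℝ} (hl0 : 0 ≤ l) (hl : l ≤ u₀ / 2) (a : ℝ) :
    μ {ω | a ≤ ∑ i ∈ Finset.range J, W i ω} ≤
      ENNReal.ofReal (Real.exp (-l * a + l ^ 2 * J)) := by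
  have hexpint : ∀ i, Integrable (fun ω => Real.exp (l * W i ω)) μ := fun i =>
    integrable_of_bdd (((hm i).const_mul l).exp).aestronglyMeasurable (Real.exp (l * 2))
      (fun ω => by
        rw [Real.norm_eq_abs, abs_of_pos (Real.exp_pos _), Real.exp_le_exp]
        nlinarith [hb i ω, abs_nonneg (W i ω), le_abs_self (W i ω)])
  have hint : Integrable (fun ω => Real.exp (l * (∑ i ∈ Finset.range J, W i) ω)) μ :=
    hindep.integrable_exp_mul_sum hm (fun i _ => hexpint i)
  have hcher := measure_ge_le_exp_mul_mgf (X := ∑ i ∈ Finset.range J, W i) (μ := μ)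
    a hl0 hint
  have hmgf : mgf (∑ i ∈ Finset.range J, W i) μ l ≤ Real.exp (l ^ 2 * J) := by
    rw [hindep.mgf_sum hm]
    calc ∏ i ∈ Finset.range J, mgf (W i) μ l
        ≤ ∏ _i ∈ Finset.range J, Real.exp (l ^ 2) := by
          apply Finset.prod_le_prod (fun i _ => mgf_nonneg)
          intro i _
          exact mgf_single μ (hm i) (hb i) (h0 i) (h2 i) hu₀pos hu₀ hl0 hl hquad
      _ = Real.exp (l ^ 2 * J) := by
          rw [Finset.prod_const, Finset.card_range, ← Real.exp_nat_mul, mul_comm]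
  have hset : {ω | a ≤ ∑ i ∈ Finset.range J, W i ω} =
      {ω | a ≤ (∑ i ∈ Finset.range J, W i) ω} := by
    simp [Finset.sum_apply]
  rw [hset]
  have hne : μ {ω | a ≤ (∑ i ∈ Finset.range J, W i) ω} ≠ ⊤ := measure_ne_top _ _
  rw [← ENNReal.ofReal_toReal hne]
  apply ENNReal.ofReal_le_ofReal
  calc (μ {ω | a ≤ (∑ i ∈ Finset.range J, W i) ω}).toReal
      ≤ Real.exp (-l * a) * mgf (∑ i ∈ Finset.range J, W i) μ l := hcher
    _ ≤ Real.exp (-l * a) * Real.exp (l ^ 2 * J) := by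
        apply mul_le_mul_of_nonneg_left hmgf (Real.exp_pos _).le
    _ = Real.exp (-l * a + l ^ 2 * J) := by rw [← Real.exp_add]
lemma choose_lambda {u₀ C x L ℓ : ℝ} (J : ℕ) (hu₀pos : 0 < u₀) (hJ1 : 1 ≤ J)
    (hx : 1 < x) (hℓ : ℓ = Real.log (x + 1)) (hL0 : 0 ≤ L) (hLle : L ≤ x / ℓ)
    (hJle : (J : ℝ) ≤ C * x / ℓ) :
    ∃ l : ℝ, 0 ≤ l ∧ l ≤ u₀ / 2 ∧
      2 * ℓ + 2 * L ≤ l * (max (Real.sqrt (8 * C)) (8 / u₀) *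
        (Real.sqrt x + Real.sqrt (x * L / ℓ))) - l ^ 2 * J := by
  have hJpos : (0:ℝ) < J := by exact_mod_cast Nat.lt_of_lt_of_le Nat.zero_lt_one hJ1
  have hℓpos : 0 < ℓ := by
    rw [hℓ]; apply Real.log_pos; linarith
  have hCpos : 0 < C := by
    by_contra hC
    push_neg at hC
    have : C * x / ℓ ≤ 0 := by
      apply div_nonpos_of_nonpos_of_nonneg _ hℓpos.le
      nlinarith
    linarith
  set D := max (Real.sqrt (8 * C)) (8 / u₀) with hD
  set b := Real.sqrt x + Real.sqrt (x * L / ℓ) with hb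
  have hxpos : (0:ℝ) < x := by linarith
  have hsx : 0 < Real.sqrt x := Real.sqrt_pos.2 hxpos
  have hs2 : 0 ≤ Real.sqrt (x * L / ℓ) := Real.sqrt_nonneg _
  have hbpos : 0 < b := by rw [hb]; positivity
  have hDpos : 0 < D := lt_of_lt_of_le (by positivity) (le_max_right _ _)
  have hD2 : 8 * C ≤ D ^ 2 := by
    have h1 : Real.sqrt (8 * C) ≤ D := le_max_left _ _
    have := Real.sq_sqrt (by positivity : (0:ℝ) ≤ 8 * C)
    nlinarith [Real.sqrt_nonneg (8 * C)]
  have hb2 : x + x * L / ℓ ≤ b ^ 2 := by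
    have h1 := Real.sq_sqrt hxpos.le
    have h2 : Real.sqrt (x * L / ℓ) ^ 2 = x * L / ℓ := Real.sq_sqrt (by positivity)
    rw [hb]
    nlinarith [mul_nonneg hsx.le hs2]
  set T := D * b with hT
  have hTpos : 0 < T := mul_pos hDpos hbpos
  have hT2 : 8 * C * (x + x * L / ℓ) ≤ T ^ 2 := by
    rw [hT, mul_pow]
    have := mul_le_mul hD2 hb2 (by positivity) (sq_nonneg D)
    linarith
  rcases le_total (T / (2 * J)) (u₀ / 2) with hcase | hcase
  · refine ⟨T / (2 * J), by positivity, hcase, ?_⟩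
    have heq : T / (2 * J) * T - (T / (2 * J)) ^ 2 * J = T ^ 2 / (4 * J) := by
      field_simp
      ring
    rw [heq, le_div_iff₀ (by positivity)]
    have h1 : (2 * ℓ + 2 * L) * (4 * J) ≤ (2 * ℓ + 2 * L) * (4 * (C * x / ℓ)) := by
      have hnn : 0 ≤ 2 * ℓ + 2 * L := by positivity
      nlinarith
    have h2 : (2 * ℓ + 2 * L) * (4 * (C * x / ℓ)) = 8 * C * (x + x * L / ℓ) := by
      field_simp
      ring
    linarith
  · refine ⟨u₀ / 2, by positivity, le_refl _, ?_⟩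
    have hJT : J * u₀ ≤ T := by
      rw [div_le_div_iff₀ (by positivity) (by positivity)] at hcase
      nlinarith
    have h1 : (u₀ / 2) ^ 2 * J ≤ u₀ / 4 * T := by
      have e : (u₀ / 2) ^ 2 * J = u₀ / 4 * (J * u₀) := by ring
      rw [e]
      exact mul_le_mul_of_nonneg_left hJT (by positivity)
    have h2 : 8 / u₀ * b ≤ T := by
      rw [hT]
      apply mul_le_mul_of_nonneg_right (le_max_right _ _) hbpos.le
    have h3 : u₀ / 4 * ((8 / u₀) * b) = 2 * b := by field_simp; ring
    have h4 : ℓ ≤ Real.sqrt x := by rw [hℓ]; exact log_add_one_le_sqrt hx.le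
    have h5 : L ≤ Real.sqrt (x * L / ℓ) := by
      have hL2 : L ^ 2 ≤ x * L / ℓ := by
        have : L * L ≤ (x / ℓ) * L := mul_le_mul_of_nonneg_right hLle hL0
        calc L ^ 2 = L * L := sq L
          _ ≤ (x / ℓ) * L := this
          _ = x * L / ℓ := by ring
      calc L = Real.sqrt (L ^ 2) := (Real.sqrt_sq hL0).symm
        _ ≤ Real.sqrt (x * L / ℓ) := Real.sqrt_le_sqrt hL2
    have h6 : 2 * ℓ + 2 * L ≤ 2 * b := by rw [hb]; linarith
    have h7 : u₀ / 4 * (8 / u₀ * b) ≤ u₀ / 4 * T := mul_le_mul_of_nonneg_left h2 (by positivity)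
    linarith
lemma cpow_eq_cos_sin (t : ℝ) {u : ℝ} (hu : 0 < u) :
    (u : ℂ) ^ (-(t : ℂ) * Complex.I) =
      ((Real.cos (t * Real.log u) : ℝ) : ℂ) +
        ((-Real.sin (t * Real.log u) : ℝ) : ℂ) * Complex.I := by
  have hne : (u : ℂ) ≠ 0 := by exact_mod_cast hu.ne'
  rw [Complex.cpow_def_of_ne_zero hne, ← Complex.ofReal_log hu.le]
  have h1 : (Real.log u : ℂ) * (-(t : ℂ) * Complex.I) =
      ((-(t * Real.log u) : ℝ) : ℂ) * Complex.I := by push_cast; ring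
  rw [h1, Complex.exp_mul_I]
  simp [← Complex.ofReal_neg, ← Complex.ofReal_cos, ← Complex.ofReal_sin,
    Real.cos_neg, Real.sin_neg]

lemma centered_props {Ω : Type*} [MeasurableSpace Ω] (μ : Measure Ω) [IsProbabilityMeasure μ]
    {f : Ω → ℝ} (hm : Measurable f) (hb : ∀ ω, |f ω| ≤ 1) :
    (∀ ω, |f ω - ∫ x, f x ∂μ| ≤ 2) ∧ (∫ ω, (f ω - ∫ x, f x ∂μ) ∂μ = 0) ∧
      (∫ ω, (f ω - ∫ x, f x ∂μ) ^ 2 ∂μ ≤ 1) := by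
  have hint : Integrable f μ := integrable_of_bdd hm.aestronglyMeasurable 1
    (fun ω => by rw [Real.norm_eq_abs]; exact hb ω)
  set c := ∫ x, f x ∂μ with hc
  have habs : |c| ≤ 1 := by
    calc |c| ≤ ∫ x, |f x| ∂μ := by
          simpa [Real.norm_eq_abs] using norm_integral_le_integral_norm (μ := μ) f
      _ ≤ ∫ _x, (1 : ℝ) ∂μ := integral_mono hint.abs (integrable_const 1) hb
      _ = 1 := by simp
  have hf2 : Integrable (fun x => f x ^ 2) μ :=
    integrable_of_bdd (hm.pow_const 2).aestronglyMeasurable 1 (fun ω => by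
      rw [Real.norm_eq_abs, abs_pow]
      calc |f ω| ^ 2 ≤ 1 ^ 2 := pow_le_pow_left₀ (abs_nonneg _) (hb ω) 2
        _ = 1 := one_pow 2)
  refine ⟨fun ω => ?_, ?_, ?_⟩
  · calc |f ω - c| = |f ω + -c| := by ring_nf
      _ ≤ |f ω| + |(-c)| := abs_add_le _ _
      _ ≤ 1 + 1 := by rw [abs_neg]; exact add_le_add (hb ω) habs
      _ = 2 := by norm_num
  · rw [integral_sub hint (integrable_const c), integral_const]
    simp [hc]
  · have hexp : ∫ ω, (f ω - c) ^ 2 ∂μ = (∫ ω, f ω ^ 2 ∂μ) - c ^ 2 := by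
      have e : ∀ ω, (f ω - c) ^ 2 = f ω ^ 2 - (2 * c) * f ω + c ^ 2 := fun ω => by ring
      rw [integral_congr_ae (ae_of_all _ e)]
      have i1 : Integrable (fun ω => f ω ^ 2 - 2 * c * f ω) μ :=
        hf2.sub (hint.const_mul (2 * c))
      rw [integral_add i1 (integrable_const _),
        integral_sub hf2 (hint.const_mul (2 * c)), integral_const_mul, integral_const, ← hc]
      simp
      ring
    rw [hexp]
    have h1 : ∫ ω, f ω ^ 2 ∂μ ≤ 1 := by
      calc ∫ ω, f ω ^ 2 ∂μ ≤ ∫ _ω, (1 : ℝ) ∂μ := by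
            apply integral_mono hf2 (integrable_const 1)
            intro ω
            calc f ω ^ 2 = |f ω| ^ 2 := (sq_abs _).symm
              _ ≤ 1 ^ 2 := pow_le_pow_left₀ (abs_nonneg _) (hb ω) 2
              _ = 1 := one_pow 2
        _ = 1 := by simp
    nlinarith [sq_nonneg c]

lemma tail_final {Ω : Type*} [MeasurableSpace Ω] (μ : Measure Ω) [IsProbabilityMeasure μ]
    (W : ℕ → Ω → ℝ) (hindep : iIndepFun W μ)
    (hm : ∀ i, Measurable (W i)) (hb : ∀ i ω, |W i ω| ≤ 2)
    (h0 : ∀ i, ∫ ω, W i ω ∂μ = 0) (h2 : ∀ i, ∫ ω, (W i ω) ^ 2 ∂μ ≤ 1)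
    {u₀ : ℝ} (hu₀pos : 0 < u₀) (hu₀ : Real.exp u₀ = 1 + u₀ + u₀ ^ 2)
    {C x L ℓ : ℝ} (J : ℕ) (hJ1 : 1 ≤ J) (hx : 1 < x)
    (hℓ : ℓ = Real.log (x + 1)) (hL0 : 0 ≤ L) (hLle : L ≤ x / ℓ)
    (hJle : (J : ℝ) ≤ C * x / ℓ) :
    μ {ω | max (Real.sqrt (8 * C)) (8 / u₀) * (Real.sqrt x + Real.sqrt (x * L / ℓ)) ≤
        ∑ i ∈ Finset.range J, W i ω} ≤ ENNReal.ofReal (Real.exp (-(2 * ℓ + 2 * L))) := by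
  obtain ⟨l, hl0, hl, hkey⟩ := choose_lambda J hu₀pos hJ1 hx hℓ hL0 hLle hJle
  refine (tail_one μ W hindep hm hb h0 h2 hu₀pos hu₀
    (fun u hu => exp_quad_bound hu₀pos hu₀ hu) J hl0 hl _).trans ?_
  apply ENNReal.ofReal_le_ofReal
  apply Real.exp_le_exp.2
  linarith

end Aux

/-- Let `F_c` be continuous, non-decreasing, `F_c(1) = 0`,
`F_c(x) → ∞`, `F_c(x) ≤ C x/log(x+1)`. With `q 0 = 1`, `q j = min{x : F_c x = j}`, let
`P_j` (`j ≥ 1`) be independent random variables, `P_j` distributed according to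
`dF_c` restricted to `(q_{j-1}, q_j]`. Let `u₀` be the positive root of
`e^u = 1+u+u²` and `D = max(√(8C), 8/u₀)`. Then for all `t` and `J ≥ 1` with
`x := q J` satisfying `x/log(x+1) ≥ log(|t|+1)`,
`P(|∑_{j≤J} P_j^{-it} - ∫_1^x u^{-it} dF_c(u)| ≥ √2 D (√x + √(x log(|t|+1)/log(x+1))))
  ≤ 4/((x+1)²(|t|+1)²)`. -/
theorem statement18 (F : StieltjesFunction ℝ) (hFcont : Continuous F)
    (hF1 : F 1 = 0) (hFinfty : Tendsto F atTop atTop)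
    (C : ℝ) (hCheb : ∀ x : ℝ, 1 ≤ x → F x ≤ C * x / Real.log (x + 1))
    (q : ℕ → ℝ) (hq0 : q 0 = 1)
    (hq : ∀ j : ℕ, 1 ≤ j → IsLeast {x : ℝ | F x = (j : ℝ)} (q j))
    {Ω : Type*} [MeasurableSpace Ω] (μ : Measure Ω) [IsProbabilityMeasure μ]
    (P : ℕ → Ω → ℝ) (hmeas : ∀ j, Measurable (P j))
    (hindep : iIndepFun (fun j : ℕ => P (j + 1)) μ)
    (hdist : ∀ j : ℕ, 1 ≤ j →
      Measure.map (P j) μ = F.measure.restrict (Set.Ioc (q (j - 1)) (q j)))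
    (u₀ : ℝ) (hu₀pos : 0 < u₀) (hu₀ : Real.exp u₀ = 1 + u₀ + u₀ ^ 2) :
    ∀ t : ℝ, ∀ J : ℕ, 1 ≤ J →
      Real.log (|t| + 1) ≤ q J / Real.log (q J + 1) →
      μ {ω : Ω |
          Real.sqrt 2 * max (Real.sqrt (8 * C)) (8 / u₀) *
            (Real.sqrt (q J) +
              Real.sqrt (q J * Real.log (|t| + 1) / Real.log (q J + 1))) ≤
          ‖(∑ j ∈ Finset.Icc 1 J, (P j ω : ℂ) ^ (-(t : ℂ) * Complex.I)) -
            ∫ u in Set.Ioc (1 : ℝ) (q J), (u : ℂ) ^ (-(t : ℂ) * Complex.I) ∂F.measure‖} ≤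
        ENNReal.ofReal (4 / ((q J + 1) ^ 2 * (|t| + 1) ^ 2)) := by
  intro t J hJ1 hqlog
  classical
  -- basic facts about q
  have hFq : ∀ j : ℕ, F (q j) = j := by
    intro j
    rcases Nat.eq_zero_or_pos j with h | h
    · subst h; rw [hq0]; simpa using hF1
    · exact (hq j h).1
  have hq_ge1 : ∀ j : ℕ, 1 ≤ q j := by
    intro j
    rcases Nat.eq_zero_or_pos j with h | h
    · subst h; rw [hq0]
    · by_contra hlt
      push_neg at hlt
      have h1 := F.mono hlt.le
      rw [hFq, hF1] at h1
      have h2 : (1 : ℝ) ≤ (j : ℝ) := by exact_mod_cast h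
      linarith
  have hq_gt1 : ∀ j : ℕ, 1 ≤ j → 1 < q j := by
    intro j hj
    rcases lt_or_eq_of_le (hq_ge1 j) with h | h
    · exact h
    · exfalso
      have h1 := hFq j
      rw [← h, hF1] at h1
      have h2 : (1 : ℝ) ≤ (j : ℝ) := by exact_mod_cast hj
      linarith
  have hqmono : ∀ j : ℕ, q j ≤ q (j + 1) := by
    intro j
    by_contra hlt
    push_neg at hlt
    have h1 := F.mono hlt.le
    rw [hFq, hFq] at h1
    push_cast at h1
    linarith
  set x := q J with hxdef
  have hx1 : 1 < x := hq_gt1 J hJ1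
  set ℓ : ℝ := Real.log (x + 1) with hldef
  set L : ℝ := Real.log (|t| + 1) with hLdef
  have hL0 : 0 ≤ L := Real.log_nonneg (by linarith [abs_nonneg t])
  have hℓpos : 0 < ℓ := Real.log_pos (by linarith)
  have hJle : (J : ℝ) ≤ C * x / ℓ := by
    have h := hCheb x (by linarith)
    rw [← hFq J]
    exact h
  -- the bounded component functions
  set fA : ℝ → ℝ := fun y => Real.cos (t * Real.log y) with hfA
  set fB : ℝ → ℝ := fun y => -Real.sin (t * Real.log y) with hfB
  have mfA : Measurable fA := Real.measurable_cos.comp (Real.measurable_log.const_mul t)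
  have mfB : Measurable fB := (Real.measurable_sin.comp (Real.measurable_log.const_mul t)).neg
  have hfAbd : ∀ y, |fA y| ≤ 1 := fun y => Real.abs_cos_le_one _
  have hfBbd : ∀ y, |fB y| ≤ 1 := fun y => by
    rw [hfB]; simpa [abs_neg] using Real.abs_sin_le_one (t * Real.log y)
  set cA : ℕ → ℝ := fun j => ∫ ω, fA (P j ω) ∂μ with hcA
  set cB : ℕ → ℝ := fun j => ∫ ω, fB (P j ω) ∂μ with hcB
  -- a.s. the P j land in their intervals
  have hPIoc : ∀ j : ℕ, 1 ≤ j → ∀ᵐ ω ∂μ, P j ω ∈ Set.Ioc (q (j - 1)) (q j) := by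
    intro j hj
    have hmap : μ (P j ⁻¹' Set.Ioc (q (j - 1)) (q j)) = 1 := by
      rw [← Measure.map_apply (hmeas j) measurableSet_Ioc, hdist j hj,
        Measure.restrict_apply measurableSet_Ioc, Set.inter_self,
        StieltjesFunction.measure_Ioc, hFq, hFq]
      have h1 : ((j : ℝ) - ((j - 1 : ℕ) : ℝ)) = 1 := by
        have h2 : (1 : ℕ) ≤ j := hj
        push_cast [Nat.cast_sub h2]
        ring
      rw [h1]
      simp
    have hc := measure_compl (s := P j ⁻¹' Set.Ioc (q (j - 1)) (q j))
      ((hmeas j) measurableSet_Ioc) (measure_ne_top μ _)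
    rw [hmap, measure_univ, tsub_self] at hc
    rw [ae_iff]
    have hset : {a | ¬ P j a ∈ Set.Ioc (q (j - 1)) (q j)} =
        (P j ⁻¹' Set.Ioc (q (j - 1)) (q j))ᶜ := rfl
    rw [hset]
    exact hc
  have hgood : ∀ᵐ ω ∂μ, ∀ j : ℕ, j ∈ Finset.Icc 1 J → P j ω ∈ Set.Ioc (q (j - 1)) (q j) := by
    rw [ae_all_iff]
    intro j
    by_cases hj : j ∈ Finset.Icc 1 J
    · filter_upwards [hPIoc j (Finset.mem_Icc.1 hj).1] with ω hω _
      exact hω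
    · exact ae_of_all _ (fun ω h => absurd h hj)
  -- the complex-valued integrand
  set g : ℝ → ℂ := fun u => ((fA u : ℝ) : ℂ) + ((fB u : ℝ) : ℂ) * Complex.I with hg
  have mg : Measurable g :=
    (Complex.measurable_ofReal.comp mfA).add
      ((Complex.measurable_ofReal.comp mfB).mul_const _)
  have hgbd : ∀ u, ‖g u‖ ≤ 2 := by
    intro u
    rw [hg]
    calc ‖((fA u : ℝ) : ℂ) + ((fB u : ℝ) : ℂ) * Complex.I‖
        ≤ ‖((fA u : ℝ) : ℂ)‖ + ‖((fB u : ℝ) : ℂ) * Complex.I‖ := norm_add_le _ _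
      _ = |fA u| + |fB u| := by
          rw [norm_mul]
          simp [Complex.norm_real]
      _ ≤ 1 + 1 := add_le_add (hfAbd u) (hfBbd u)
      _ = 2 := by norm_num
  have hfin : ∀ a b : ℝ, IsFiniteMeasure (F.measure.restrict (Set.Ioc a b)) := by
    intro a b
    refine ⟨?_⟩
    rw [Measure.restrict_apply_univ, StieltjesFunction.measure_Ioc]
    exact ENNReal.ofReal_lt_top
  have hgint : ∀ a b : ℝ, IntegrableOn g (Set.Ioc a b) F.measure := by
    intro a b
    haveI := hfin a b
    exact integrable_of_bdd mg.aestronglyMeasurable 2 hgbd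
  -- rewrite the integral
  have hstep1 : ∫ u in Set.Ioc (1 : ℝ) x, (u : ℂ) ^ (-(t : ℂ) * Complex.I) ∂F.measure =
      ∫ u in Set.Ioc (1 : ℝ) x, g u ∂F.measure :=
    setIntegral_congr_fun measurableSet_Ioc (fun u hu => cpow_eq_cos_sin t (lt_trans one_pos hu.1))
  have hsplit : ∀ K : ℕ, 1 ≤ K → ∫ u in Set.Ioc (1 : ℝ) (q K), g u ∂F.measure =
      ∑ j ∈ Finset.Icc 1 K, ∫ u in Set.Ioc (q (j - 1)) (q j), g u ∂F.measure := by
    intro K hK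
    induction K, hK using Nat.le_induction with
    | base =>
        rw [Finset.Icc_self, Finset.sum_singleton]
        norm_num [hq0]
    | succ K hK ih =>
        have h1K : (1 : ℝ) ≤ q K := hq_ge1 K
        have hKK : q K ≤ q (K + 1) := hqmono K
        rw [← Set.Ioc_union_Ioc_eq_Ioc h1K hKK,
          setIntegral_union (Set.Ioc_disjoint_Ioc_of_le le_rfl) measurableSet_Ioc (hgint _ _) (hgint _ _),
          ih, Finset.sum_Icc_succ_top (by omega : 1 ≤ K + 1)]
        simp
  have hpiece : ∀ j : ℕ, 1 ≤ j → ∫ u in Set.Ioc (q (j - 1)) (q j), g u ∂F.measure =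
      ((cA j : ℝ) : ℂ) + ((cB j : ℝ) : ℂ) * Complex.I := by
    intro j hj
    haveI := hfin (q (j - 1)) (q j)
    have hiA : Integrable (fun u => ((fA u : ℝ) : ℂ))
        (F.measure.restrict (Set.Ioc (q (j - 1)) (q j))) :=
      integrable_of_bdd (Complex.measurable_ofReal.comp mfA).aestronglyMeasurable 1
        (fun u => by simpa [Complex.norm_real] using hfAbd u)
    have hiB : Integrable (fun u => ((fB u : ℝ) : ℂ) * Complex.I)
        (F.measure.restrict (Set.Ioc (q (j - 1)) (q j))) :=
      integrable_of_bdd ((Complex.measurable_ofReal.comp mfB).mul_const _).aestronglyMeasurable 1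
        (fun u => by rw [norm_mul]; simpa [Complex.norm_real] using hfBbd u)
    have hsum : ∫ u in Set.Ioc (q (j - 1)) (q j), g u ∂F.measure =
        (∫ u in Set.Ioc (q (j - 1)) (q j), ((fA u : ℝ) : ℂ) ∂F.measure) +
          ∫ u in Set.Ioc (q (j - 1)) (q j), ((fB u : ℝ) : ℂ) * Complex.I ∂F.measure :=
      integral_add hiA hiB
    have h1 : ∫ u in Set.Ioc (q (j - 1)) (q j), ((fA u : ℝ) : ℂ) ∂F.measure =
        ((∫ u in Set.Ioc (q (j - 1)) (q j), fA u ∂F.measure : ℝ) : ℂ) := integral_ofReal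
    have h2 : ∫ u in Set.Ioc (q (j - 1)) (q j), ((fB u : ℝ) : ℂ) * Complex.I ∂F.measure =
        ((∫ u in Set.Ioc (q (j - 1)) (q j), fB u ∂F.measure : ℝ) : ℂ) * Complex.I := by
      simp_rw [← Complex.real_smul]
      exact integral_smul_const _ _
    have hmapA : ∫ u in Set.Ioc (q (j - 1)) (q j), fA u ∂F.measure = cA j := by
      rw [hcA, ← hdist j hj, integral_map (hmeas j).aemeasurable mfA.aestronglyMeasurable]
    have hmapB : ∫ u in Set.Ioc (q (j - 1)) (q j), fB u ∂F.measure = cB j := by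
      rw [hcB, ← hdist j hj, integral_map (hmeas j).aemeasurable mfB.aestronglyMeasurable]
    rw [hsum, h1, h2, hmapA, hmapB]
  have hM : ∫ u in Set.Ioc (1 : ℝ) x, (u : ℂ) ^ (-(t : ℂ) * Complex.I) ∂F.measure =
      ((∑ j ∈ Finset.Icc 1 J, cA j : ℝ) : ℂ) +
        ((∑ j ∈ Finset.Icc 1 J, cB j : ℝ) : ℂ) * Complex.I := by
    rw [hstep1, hsplit J hJ1,
      Finset.sum_congr rfl (fun j hj => hpiece j (Finset.mem_Icc.1 hj).1),
      Finset.sum_add_distrib, ← Finset.sum_mul]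
    push_cast
    ring
  -- centered variable properties
  have hpropsA : ∀ j : ℕ, (∀ ω, |fA (P j ω) - cA j| ≤ 2) ∧
      (∫ ω, (fA (P j ω) - cA j) ∂μ = 0) ∧ (∫ ω, (fA (P j ω) - cA j) ^ 2 ∂μ ≤ 1) := by
    intro j
    have := centered_props μ (mfA.comp (hmeas j)) (fun ω => hfAbd (P j ω))
    simpa [hcA] using this
  have hpropsB : ∀ j : ℕ, (∀ ω, |fB (P j ω) - cB j| ≤ 2) ∧
      (∫ ω, (fB (P j ω) - cB j) ∂μ = 0) ∧ (∫ ω, (fB (P j ω) - cB j) ^ 2 ∂μ ≤ 1) := by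
    intro j
    have := centered_props μ (mfB.comp (hmeas j)) (fun ω => hfBbd (P j ω))
    simpa [hcB] using this
  -- independence of the four families
  have hiW1 : iIndepFun
      (fun i (ω : Ω) => fA (P (i + 1) ω) - cA (i + 1)) μ :=
    hindep.comp (fun i => fun y => fA y - cA (i + 1)) (fun i => mfA.sub measurable_const)
  have hiW2 : iIndepFun
      (fun i (ω : Ω) => -(fA (P (i + 1) ω) - cA (i + 1))) μ :=
    hindep.comp (fun i => fun y => -(fA y - cA (i + 1))) (fun i => (mfA.sub measurable_const).neg)
  have hiW3 : iIndepFun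
      (fun i (ω : Ω) => fB (P (i + 1) ω) - cB (i + 1)) μ :=
    hindep.comp (fun i => fun y => fB y - cB (i + 1)) (fun i => mfB.sub measurable_const)
  have hiW4 : iIndepFun
      (fun i (ω : Ω) => -(fB (P (i + 1) ω) - cB (i + 1))) μ :=
    hindep.comp (fun i => fun y => -(fB y - cB (i + 1))) (fun i => (mfB.sub measurable_const).neg)
  -- tail bounds for the four families
  have hB1 := tail_final μ (fun i ω => fA (P (i + 1) ω) - cA (i + 1)) hiW1
    (fun i => (mfA.comp (hmeas _)).sub measurable_const)
    (fun i ω => (hpropsA (i + 1)).1 ω) (fun i => (hpropsA (i + 1)).2.1)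
    (fun i => (hpropsA (i + 1)).2.2) hu₀pos hu₀ (C := C) (x := x) (L := L) (ℓ := ℓ)
    J hJ1 hx1 hldef hL0 hqlog hJle
  have hB2 := tail_final μ (fun i ω => -(fA (P (i + 1) ω) - cA (i + 1))) hiW2
    (fun i => ((mfA.comp (hmeas _)).sub measurable_const).neg)
    (fun i ω => by rw [abs_neg]; exact (hpropsA (i + 1)).1 ω)
    (fun i => by rw [integral_neg, (hpropsA (i + 1)).2.1, neg_zero])
    (fun i => le_trans (le_of_eq (integral_congr_ae (ae_of_all _ (fun ω => by ring))))
      ((hpropsA (i + 1)).2.2))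
    hu₀pos hu₀ (C := C) (x := x) (L := L) (ℓ := ℓ) J hJ1 hx1 hldef hL0 hqlog hJle
  have hB3 := tail_final μ (fun i ω => fB (P (i + 1) ω) - cB (i + 1)) hiW3
    (fun i => (mfB.comp (hmeas _)).sub measurable_const)
    (fun i ω => (hpropsB (i + 1)).1 ω) (fun i => (hpropsB (i + 1)).2.1)
    (fun i => (hpropsB (i + 1)).2.2) hu₀pos hu₀ (C := C) (x := x) (L := L) (ℓ := ℓ)
    J hJ1 hx1 hldef hL0 hqlog hJle
  have hB4 := tail_final μ (fun i ω => -(fB (P (i + 1) ω) - cB (i + 1))) hiW4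
    (fun i => ((mfB.comp (hmeas _)).sub measurable_const).neg)
    (fun i ω => by rw [abs_neg]; exact (hpropsB (i + 1)).1 ω)
    (fun i => by rw [integral_neg, (hpropsB (i + 1)).2.1, neg_zero])
    (fun i => le_trans (le_of_eq (integral_congr_ae (ae_of_all _ (fun ω => by ring))))
      ((hpropsB (i + 1)).2.2))
    hu₀pos hu₀ (C := C) (x := x) (L := L) (ℓ := ℓ) J hJ1 hx1 hldef hL0 hqlog hJle
  set T' : ℝ := max (Real.sqrt (8 * C)) (8 / u₀) * (Real.sqrt x + Real.sqrt (x * L / ℓ))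
    with hT'def
  have hT'0 : 0 ≤ T' := by
    rw [hT'def]
    apply mul_nonneg (le_trans (by positivity) (le_max_right _ _)) (by positivity)
  -- the four events
  set E1 := {ω : Ω | T' ≤ ∑ i ∈ Finset.range J, (fA (P (i + 1) ω) - cA (i + 1))} with hE1
  set E2 := {ω : Ω | T' ≤ ∑ i ∈ Finset.range J, -(fA (P (i + 1) ω) - cA (i + 1))} with hE2
  set E3 := {ω : Ω | T' ≤ ∑ i ∈ Finset.range J, (fB (P (i + 1) ω) - cB (i + 1))} with hE3
  set E4 := {ω : Ω | T' ≤ ∑ i ∈ Finset.range J, -(fB (P (i + 1) ω) - cB (i + 1))} with hE4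
  -- inclusion of the event in the union
  have hsub : {ω : Ω | Real.sqrt 2 * max (Real.sqrt (8 * C)) (8 / u₀) *
      (Real.sqrt x + Real.sqrt (x * L / ℓ)) ≤
      ‖(∑ j ∈ Finset.Icc 1 J, (P j ω : ℂ) ^ (-(t : ℂ) * Complex.I)) -
        ∫ u in Set.Ioc (1 : ℝ) x, (u : ℂ) ^ (-(t : ℂ) * Complex.I) ∂F.measure‖}
      ≤ᵐ[μ] (E1 ∪ E2 ∪ E3 ∪ E4 : Set Ω) := by
    filter_upwards [hgood] with ω hω hmem
    have hterm : ∀ j ∈ Finset.Icc 1 J, (P j ω : ℂ) ^ (-(t : ℂ) * Complex.I) =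
        ((fA (P j ω) : ℝ) : ℂ) + ((fB (P j ω) : ℝ) : ℂ) * Complex.I := by
      intro j hj
      have h1 : 1 ≤ q (j - 1) := hq_ge1 _
      have h2 := (hω j hj).1
      exact cpow_eq_cos_sin t (by linarith)
    set RA : ℝ := (∑ j ∈ Finset.Icc 1 J, fA (P j ω)) - ∑ j ∈ Finset.Icc 1 J, cA j with hRA
    set RB : ℝ := (∑ j ∈ Finset.Icc 1 J, fB (P j ω)) - ∑ j ∈ Finset.Icc 1 J, cB j with hRB
    have hSval : (∑ j ∈ Finset.Icc 1 J, (P j ω : ℂ) ^ (-(t : ℂ) * Complex.I)) -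
        (∫ u in Set.Ioc (1 : ℝ) x, (u : ℂ) ^ (-(t : ℂ) * Complex.I) ∂F.measure) =
        ((RA : ℝ) : ℂ) + ((RB : ℝ) : ℂ) * Complex.I := by
      rw [Finset.sum_congr rfl hterm, hM, hRA, hRB, Finset.sum_add_distrib, ← Finset.sum_mul]
      push_cast
      ring
    replace hmem : Real.sqrt 2 * max (Real.sqrt (8 * C)) (8 / u₀) *
        (Real.sqrt x + Real.sqrt (x * L / ℓ)) ≤
        ‖(∑ j ∈ Finset.Icc 1 J, (P j ω : ℂ) ^ (-(t : ℂ) * Complex.I)) -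
          ∫ u in Set.Ioc (1 : ℝ) x, (u : ℂ) ^ (-(t : ℂ) * Complex.I) ∂F.measure‖ := hmem
    rw [hSval] at hmem
    have hnormsq : ‖(((RA : ℝ) : ℂ) + ((RB : ℝ) : ℂ) * Complex.I)‖ ^ 2 = RA ^ 2 + RB ^ 2 := by
      rw [Complex.sq_norm, Complex.normSq_apply]
      simp [Complex.add_re, Complex.add_im, Complex.mul_re, Complex.mul_im]
      ring
    have h2T : 2 * T' ^ 2 ≤ RA ^ 2 + RB ^ 2 := by
      have h0' : 0 ≤ Real.sqrt 2 * T' := mul_nonneg (Real.sqrt_nonneg 2) hT'0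
      have hmem2 : Real.sqrt 2 * T' ≤
          ‖(((RA : ℝ) : ℂ) + ((RB : ℝ) : ℂ) * Complex.I)‖ := by
        rw [hT'def, ← mul_assoc]
        exact hmem
      have hsq := pow_le_pow_left₀ h0' hmem2 2
      rw [hnormsq, mul_pow, Real.sq_sqrt (by norm_num : (0:ℝ) ≤ 2)] at hsq
      exact hsq
    have hcase : T' ≤ RA ∨ T' ≤ -RA ∨ T' ≤ RB ∨ T' ≤ -RB := by
      have habs : T' ≤ |RA| ∨ T' ≤ |RB| := by
        by_contra hno
        push_neg at hno
        have h1 : RA ^ 2 < T' ^ 2 := by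
          rw [← sq_abs RA]
          exact pow_lt_pow_left₀ hno.1 (abs_nonneg _) (by norm_num)
        have h2 : RB ^ 2 < T' ^ 2 := by
          rw [← sq_abs RB]
          exact pow_lt_pow_left₀ hno.2 (abs_nonneg _) (by norm_num)
        linarith
      rcases habs with h | h
      · rcases le_abs.1 h with h' | h'
        exacts [Or.inl h', Or.inr (Or.inl h')]
      · rcases le_abs.1 h with h' | h'
        exacts [Or.inr (Or.inr (Or.inl h')), Or.inr (Or.inr (Or.inr h'))]
    have hRAeq : RA = ∑ i ∈ Finset.range J, (fA (P (i + 1) ω) - cA (i + 1)) := by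
      rw [hRA, ← Finset.sum_sub_distrib, ← Finset.Ico_add_one_right_eq_Icc, Finset.sum_Ico_eq_sum_range]
      refine Finset.sum_congr rfl (fun i _ => ?_)
      rw [Nat.add_comm 1 i]
    have hRBeq : RB = ∑ i ∈ Finset.range J, (fB (P (i + 1) ω) - cB (i + 1)) := by
      rw [hRB, ← Finset.sum_sub_distrib, ← Finset.Ico_add_one_right_eq_Icc, Finset.sum_Ico_eq_sum_range]
      refine Finset.sum_congr rfl (fun i _ => ?_)
      rw [Nat.add_comm 1 i]
    have hnegA : -RA = ∑ i ∈ Finset.range J, -(fA (P (i + 1) ω) - cA (i + 1)) := by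
      rw [Finset.sum_neg_distrib, hRAeq]
    have hnegB : -RB = ∑ i ∈ Finset.range J, -(fB (P (i + 1) ω) - cB (i + 1)) := by
      rw [Finset.sum_neg_distrib, hRBeq]
    rcases hcase with h | h | h | h
    · rw [hRAeq] at h
      exact Set.mem_union_left _ (Set.mem_union_left _ (Set.mem_union_left _ h))
    · rw [hnegA] at h
      exact Set.mem_union_left _ (Set.mem_union_left _ (Set.mem_union_right _ h))
    · rw [hRBeq] at h
      exact Set.mem_union_left _ (Set.mem_union_right _ h)
    · rw [hnegB] at h
      exact Set.mem_union_right _ h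
  -- combine
  have hunion : μ (E1 ∪ E2 ∪ E3 ∪ E4 : Set Ω) ≤ μ E1 + μ E2 + μ E3 + μ E4 := by
    calc μ (E1 ∪ E2 ∪ E3 ∪ E4 : Set Ω) ≤ μ (E1 ∪ E2 ∪ E3 : Set Ω) + μ E4 :=
          measure_union_le _ _
      _ ≤ (μ (E1 ∪ E2 : Set Ω) + μ E3) + μ E4 :=
          add_le_add_left (measure_union_le _ _) _
      _ ≤ ((μ E1 + μ E2) + μ E3) + μ E4 :=
          by gcongr; exact measure_union_le _ _
  have hval : Real.exp (-(2 * ℓ + 2 * L)) = 1 / ((x + 1) ^ 2 * (|t| + 1) ^ 2) := by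
    have hx1p : (0:ℝ) < x + 1 := by linarith
    have htp : (0:ℝ) < |t| + 1 := by positivity
    have e1 : Real.exp (2 * ℓ + 2 * L) = (x + 1) ^ 2 * (|t| + 1) ^ 2 := by
      rw [hldef, hLdef, Real.exp_add, two_mul, two_mul, Real.exp_add, Real.exp_add,
        Real.exp_log hx1p, Real.exp_log htp]
      ring
    rw [Real.exp_neg, e1, one_div]
  have hApos : (0:ℝ) < (x + 1) ^ 2 * (|t| + 1) ^ 2 := by positivity
  calc μ {ω : Ω | Real.sqrt 2 * max (Real.sqrt (8 * C)) (8 / u₀) *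
      (Real.sqrt x + Real.sqrt (x * L / ℓ)) ≤
      ‖(∑ j ∈ Finset.Icc 1 J, (P j ω : ℂ) ^ (-(t : ℂ) * Complex.I)) -
        ∫ u in Set.Ioc (1 : ℝ) x, (u : ℂ) ^ (-(t : ℂ) * Complex.I) ∂F.measure‖}
      ≤ μ (E1 ∪ E2 ∪ E3 ∪ E4 : Set Ω) := measure_mono_ae hsub
    _ ≤ μ E1 + μ E2 + μ E3 + μ E4 := hunion
    _ ≤ ENNReal.ofReal (Real.exp (-(2 * ℓ + 2 * L))) +
        ENNReal.ofReal (Real.exp (-(2 * ℓ + 2 * L))) +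
        ENNReal.ofReal (Real.exp (-(2 * ℓ + 2 * L))) +
        ENNReal.ofReal (Real.exp (-(2 * ℓ + 2 * L))) :=
          add_le_add (add_le_add (add_le_add hB1 hB2) hB3) hB4
    _ = ENNReal.ofReal (4 / ((x + 1) ^ 2 * (|t| + 1) ^ 2)) := by
        rw [hval, ← ENNReal.ofReal_add (by positivity) (by positivity),
          ← ENNReal.ofReal_add (by positivity) (by positivity),
          ← ENNReal.ofReal_add (by positivity) (by positivity)]
        congr 1
        field_simp
        ring
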